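/- Let f be a λ-eigenfunction of F_q^n with λ = (q−1)n−qh, and let I ⊆ {1,...,n} with |I| = k ≤ min{h, n−h}. Then for every vertex α and every j with 0 ≤ j ≤ n−k, one has v_j^{Ī,f}(α) = Σ_{i=0}^{j} r_{ij} v_i^{I,f}(α), where r_{ij} = (−1)^i Σ_{l=0}^{j−i} P_{j−i−l}^{(q)}(h−k; n−2k) (q−2)^l C(k−i, l). -/

import Mathlib

/-- The q-ary Krawtchouk polynomial value P_i^{(q)}(t;N). -/
def kraw (q i t N : ℕ) : ℤ :=
  ∑ j ∈ Finset.range (i+1),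
    (-1:ℤ)^j * ((q:ℤ)-1)^(i-j) * (t.choose j : ℤ) * ((N-t).choose (i-j) : ℤ)

/-- Local distribution component v_j^{I,f}(α): sum of f over the face Γ^I(α)
intersected with the sphere of radius j around α. -/
noncomputable def locdist {q n : ℕ} (f : (Fin n → Fin q) → ℂ) (α : Fin n → Fin q)
    (I : Finset (Fin n)) (j : ℕ) : ℂ :=
  ∑ β ∈ Finset.univ.filter
      (fun β : Fin n → Fin q => (∀ i ∈ Iᶜ, β i = α i) ∧ hammingDist α β = j), f β

open Finset Polynomial

section PolyPart
variable {R : Type*} [CommRing R]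

lemma coeff_one_add_CX_pow (c : R) (m i : ℕ) :
    ((1 + C c * X : R[X]) ^ m).coeff i = (m.choose i : R) * c ^ i := by
  rw [add_comm, add_pow, finset_sum_coeff]
  have hterm : ∀ b : ℕ, ((C c * X) ^ b * 1 ^ (m - b) * (m.choose b : R[X])).coeff i
      = if b = i then (m.choose b : R) * c ^ b else 0 := by
    intro b
    rw [one_pow, mul_one, mul_pow, ← C_pow, ← Polynomial.C_eq_natCast, mul_comm, ← mul_assoc,
      ← C_mul, coeff_C_mul, coeff_X_pow]
    split
    · rename_i h; subst h; simp [mul_comm]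
    · rename_i h; simp [Ne.symm h]
  simp only [hterm]
  rw [Finset.sum_ite_eq' (Finset.range (m+1)) i (fun b => (m.choose b : R) * c ^ b)]
  split
  · rfl
  · rename_i hi
    rw [Finset.mem_range, not_lt] at hi
    have : m.choose i = 0 := Nat.choose_eq_zero_of_lt (by omega)
    simp [this]

lemma kraw_coeff (q t N i : ℕ) :
    ((kraw q i t N : ℤ) : R)
      = (((1 + C ((q:R)-1) * X) ^ (N-t) * (1 + C (-1:R) * X) ^ t).coeff i) := by
  rw [coeff_mul, Finset.Nat.sum_antidiagonal_eq_sum_range_succ_mk]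
  simp only [coeff_one_add_CX_pow]
  rw [← Finset.sum_range_reflect]
  unfold kraw
  push_cast
  refine Finset.sum_congr rfl ?_
  intro l hl
  rw [Finset.mem_range] at hl
  have h1 : i - (i - l) = l := by omega
  rw [h1]
  ring

lemma natDegree_one_add_CX_le (c : R) : (1 + C c * X : R[X]).natDegree ≤ 1 := by
  refine (natDegree_add_le _ _).trans ?_
  simp only [natDegree_one]
  have := (natDegree_C_mul_le c (X : R[X])).trans natDegree_X_le
  omega

lemma kraw_eq_zero_of_gt (q t N i : ℕ) (ht : t ≤ N) (hi : N < i) : kraw q i t N = 0 := by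
  have h := (kraw_coeff (R := ℤ) q t N i)
  rw [Int.cast_id] at h
  rw [h]
  apply coeff_eq_zero_of_natDegree_lt
  calc ((1 + C ((q:ℤ)-1) * X) ^ (N-t) * (1 + C (-1:ℤ) * X) ^ t).natDegree
      ≤ ((1 + C ((q:ℤ)-1) * X) ^ (N-t)).natDegree + ((1 + C (-1:ℤ) * X) ^ t).natDegree :=
        natDegree_mul_le
    _ ≤ (N-t) * 1 + t * 1 := by
        gcongr <;> exact natDegree_pow_le.trans (by
          gcongr; exact natDegree_one_add_CX_le _)
    _ < i := by omega

lemma kraw_hom (q a k : ℕ) (ha : a ≤ k) (y z : R) :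
    ∑ i ∈ Finset.range (k+1), ((kraw q i a k : ℤ) : R) * y^i * z^(k-i)
      = (z - y)^a * (z + ((q:R)-1)*y)^(k-a) := by
  classical
  unfold kraw
  set u : ℕ → R := fun m => (-1:R)^m * y^m * z^(a-m) * (a.choose m : R) with hu
  set v : ℕ → R := fun r => ((q:R)-1)^r * y^r * z^(k-a-r) * ((k-a).choose r : R) with hv
  have hvz : ∀ m r : ℕ, (¬ (m + r ≤ k)) → m ≤ k → r ≤ k → u m * v r = 0 := by
    intro m r hmr hm hr
    rcases le_or_gt m a with h1 | h1
    · have : k - a < r := by omega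
      simp [hu, hv, Nat.choose_eq_zero_of_lt this]
    · simp [hu, hv, Nat.choose_eq_zero_of_lt h1]
  have key : ∀ i ∈ Finset.range (k+1), ∀ m ∈ Finset.range (i+1),
      ((-1:R)^m * ((q:R)-1)^(i-m) * (a.choose m : R) * ((k-a).choose (i-m) : R)) * y^i * z^(k-i)
        = u m * v (i-m) := by
    intro i hi m hm
    rw [Finset.mem_range] at hi hm
    rcases le_or_gt m a with h1 | h1
    · rcases le_or_gt (i - m) (k - a) with h2 | h2
      · have e1 : m + (i - m) = i := by omega
        have e2 : (a - m) + (k - a - (i-m)) = k - i := by omega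
        simp only [hu, hv]
        calc ((-1:R)^m * ((q:R)-1)^(i-m) * (a.choose m : R) * ((k-a).choose (i-m) : R)) * y^i * z^(k-i)
            = ((-1:R)^m * ((q:R)-1)^(i-m) * (a.choose m : R) * ((k-a).choose (i-m) : R))
              * (y^m * y^(i-m)) * (z^(a-m) * z^(k-a-(i-m))) := by
              rw [← pow_add, ← pow_add, e1, e2]
          _ = _ := by ring
      · simp [hu, hv, Nat.choose_eq_zero_of_lt h2]
    · simp [hu, hv, Nat.choose_eq_zero_of_lt h1]
  -- rewrite LHS termwise
  have lhs_eq : ∑ i ∈ Finset.range (k+1),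
      (((∑ j ∈ Finset.range (i+1),
        (-1:ℤ)^j * ((q:ℤ)-1)^(i-j) * (a.choose j : ℤ) * ((k-a).choose (i-j) : ℤ)) : ℤ) : R) * y^i * z^(k-i)
      = ∑ i ∈ Finset.range (k+1), ∑ m ∈ Finset.range (i+1), u m * v (i-m) := by
    refine Finset.sum_congr rfl fun i hi => ?_
    push_cast
    rw [Finset.sum_mul, Finset.sum_mul]
    exact Finset.sum_congr rfl fun m hm => key i hi m hm
  rw [lhs_eq]
  -- RHS
  have hz1 : z - y = (-1) * y + z := by ring
  have hz2 : z + ((q:R)-1)*y = ((q:R)-1)*y + z := by ring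
  rw [hz1, hz2, add_pow, add_pow]
  have ru : (∑ m ∈ Finset.range (a+1), ((-1:R)*y)^m * z^(a-m) * (a.choose m : R))
      = ∑ m ∈ Finset.range (k+1), u m := by
    have h1 : ∀ m : ℕ, ((-1:R)*y)^m * z^(a-m) * (a.choose m : R) = u m := by
      intro m; simp only [hu, mul_pow]; try ring
    simp only [h1]
    refine Finset.sum_subset ?_ ?_
    · exact Finset.range_subset_range.2 (by omega)
    intro m _ hm
    rw [Finset.mem_range, not_lt] at hm
    simp [hu, Nat.choose_eq_zero_of_lt (by omega : a < m)]
  have rv : (∑ r ∈ Finset.range (k-a+1), (((q:R)-1)*y)^r * z^(k-a-r) * ((k-a).choose r : R))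
      = ∑ r ∈ Finset.range (k+1), v r := by
    have h1 : ∀ r : ℕ, (((q:R)-1)*y)^r * z^(k-a-r) * ((k-a).choose r : R) = v r := by
      intro r; simp only [hv, mul_pow]; try ring
    simp only [h1]
    refine Finset.sum_subset ?_ ?_
    · exact Finset.range_subset_range.2 (by omega)
    intro r _ hr
    rw [Finset.mem_range, not_lt] at hr
    simp [hv, Nat.choose_eq_zero_of_lt (by omega : k - a < r)]
  rw [ru, rv, Finset.sum_mul_sum]
  -- now reindex
  rw [← Finset.sum_product']
  have shrink : ∑ p ∈ Finset.range (k+1) ×ˢ Finset.range (k+1), u p.1 * v p.2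
      = ∑ p ∈ (Finset.range (k+1) ×ˢ Finset.range (k+1)).filter (fun p => p.1 + p.2 ≤ k),
          u p.1 * v p.2 := by
    refine (Finset.sum_filter_of_ne ?_).symm
    intro p hp hne
    rw [Finset.mem_product, Finset.mem_range, Finset.mem_range] at hp
    by_contra h
    exact hne (hvz p.1 p.2 h (by omega) (by omega))
  rw [shrink]
  rw [Finset.sum_sigma']
  refine Finset.sum_nbij' (fun p : (_ : ℕ) × ℕ => ((p.2 : ℕ), p.1 - p.2))
    (fun p : ℕ × ℕ => (⟨p.1 + p.2, p.1⟩ : (_ : ℕ) × ℕ)) ?_ ?_ ?_ ?_ ?_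
  · rintro ⟨i, m⟩ hp
    simp only [Finset.mem_sigma, Finset.mem_range] at hp
    simp only [Finset.mem_filter, Finset.mem_product, Finset.mem_range]
    omega
  · rintro ⟨m, r⟩ hp
    simp only [Finset.mem_filter, Finset.mem_product, Finset.mem_range] at hp
    simp only [Finset.mem_sigma, Finset.mem_range]
    omega
  · rintro ⟨i, m⟩ hp
    simp only [Finset.mem_sigma, Finset.mem_range] at hp
    have e : m + (i - m) = i := by omega
    simp [e]
  · rintro ⟨m, r⟩ hp
    simp only [Finset.mem_filter, Finset.mem_product, Finset.mem_range] at hp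
    simp [Nat.add_sub_cancel_left]
  · intro p hp
    rfl

lemma kraw_key (q n h k a j : ℕ) (ha : a ≤ k) (hk1 : k ≤ h) (hhn : h + k ≤ n) :
    kraw q j (h-a) (n-k) =
      ∑ i ∈ Finset.range (j+1), ((-1:ℤ)^i * ∑ l ∈ Finset.range (j-i+1),
          kraw q (j-i-l) (h-k) (n-2*k) * ((q:ℤ)-2)^l * ((k-i).choose l : ℤ)) * kraw q i a k := by
  classical
  set A : ℤ[X] := 1 + C ((q:ℤ)-1) * X with hA
  set B : ℤ[X] := 1 + C (-1:ℤ) * X with hB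
  set D : ℤ[X] := 1 + C ((q:ℤ)-2) * X with hD
  set G : ℤ[X] := A ^ (n-2*k-(h-k)) * B ^ (h-k) with hG
  -- inner sum as coefficient
  have r_eq : ∀ i, i ≤ j → (∑ l ∈ Finset.range (j-i+1),
      kraw q (j-i-l) (h-k) (n-2*k) * ((q:ℤ)-2)^l * ((k-i).choose l : ℤ))
      = (D^(k-i) * G).coeff (j-i) := by
    intro i hij
    rw [coeff_mul, Finset.Nat.sum_antidiagonal_eq_sum_range_succ_mk]
    refine Finset.sum_congr rfl fun l hl => ?_
    have hcD : (D^(k-i)).coeff l = ((k-i).choose l : ℤ) * ((q:ℤ)-2)^l := by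
      rw [hD]; exact coeff_one_add_CX_pow _ _ _
    have hcG : G.coeff (j-i-l) = kraw q (j-i-l) (h-k) (n-2*k) := by
      have := (kraw_coeff (R := ℤ) q (h-k) (n-2*k) (j-i-l)).symm
      rw [Int.cast_id] at this
      rw [hG, hA, hB]
      exact this
    rw [hcD, hcG]
    ring
  -- termwise: multiply by (-1)^i and kraw i
  have term_eq : ∀ i, i ≤ j →
      ((-1:ℤ)^i * (D^(k-i)*G).coeff (j-i)) * kraw q i a k
        = ((C ((-1:ℤ)^i * kraw q i a k) * D^(k-i) * G) * X^i).coeff j := by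
    intro i hij
    rw [coeff_mul_X_pow', if_pos hij,
      show C ((-1:ℤ)^i * kraw q i a k) * D^(k-i) * G
        = C ((-1:ℤ)^i * kraw q i a k) * (D^(k-i)*G) from mul_assoc _ _ _, coeff_C_mul]
    ring
  have step1 : ∑ i ∈ Finset.range (j+1), ((-1:ℤ)^i * ∑ l ∈ Finset.range (j-i+1),
          kraw q (j-i-l) (h-k) (n-2*k) * ((q:ℤ)-2)^l * ((k-i).choose l : ℤ)) * kraw q i a k
      = ∑ i ∈ Finset.range (j+1),
          ((C ((-1:ℤ)^i * kraw q i a k) * D^(k-i) * G) * X^i).coeff j := by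
    refine Finset.sum_congr rfl fun i hi => ?_
    rw [Finset.mem_range] at hi
    rw [r_eq i (by omega), term_eq i (by omega)]
  rw [step1]
  -- change summation range to range (k+1)
  have step2 : ∑ i ∈ Finset.range (j+1),
          ((C ((-1:ℤ)^i * kraw q i a k) * D^(k-i) * G) * X^i).coeff j
      = ∑ i ∈ Finset.range (k+1),
          ((C ((-1:ℤ)^i * kraw q i a k) * D^(k-i) * G) * X^i).coeff j := by
    have h1 : ∑ i ∈ Finset.range (j+1), ((C ((-1:ℤ)^i * kraw q i a k) * D^(k-i) * G) * X^i).coeff j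
        = ∑ i ∈ Finset.range (max j k + 1), ((C ((-1:ℤ)^i * kraw q i a k) * D^(k-i) * G) * X^i).coeff j := by
      refine Finset.sum_subset ?_ ?_
      · exact Finset.range_subset_range.2 (by omega)
      intro i _ hi
      rw [Finset.mem_range, not_lt] at hi
      rw [coeff_mul_X_pow', if_neg (by omega)]
    have h2 : ∑ i ∈ Finset.range (k+1), ((C ((-1:ℤ)^i * kraw q i a k) * D^(k-i) * G) * X^i).coeff j
        = ∑ i ∈ Finset.range (max j k + 1), ((C ((-1:ℤ)^i * kraw q i a k) * D^(k-i) * G) * X^i).coeff j := by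
      refine Finset.sum_subset ?_ ?_
      · exact Finset.range_subset_range.2 (by omega)
      intro i _ hi
      rw [Finset.mem_range, not_lt] at hi
      rw [kraw_eq_zero_of_gt q a k i ha (by omega)]
      simp
    rw [h1, ← h2]
  rw [step2]
  -- sum of coefficients = coefficient of sum
  rw [← finset_sum_coeff]
  -- identify polynomial sum via kraw_hom
  have sum_eq : (∑ i ∈ Finset.range (k+1), (C ((-1:ℤ)^i * kraw q i a k) * D^(k-i) * G) * X^i)
      = (∑ i ∈ Finset.range (k+1), ((kraw q i a k : ℤ) : ℤ[X]) * (-X)^i * D^(k-i)) * G := by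
    rw [Finset.sum_mul]
    refine Finset.sum_congr rfl fun i _ => ?_
    have : ((kraw q i a k : ℤ) : ℤ[X]) = C (kraw q i a k) := by
      simp
    have h2 : C ((-1:ℤ)^i * kraw q i a k) = C ((-1:ℤ)^i) * C (kraw q i a k) := map_mul _ _ _
    have h3 : ((-X:ℤ[X]))^i = C ((-1:ℤ)^i) * X^i := by rw [neg_pow, map_pow, map_neg, map_one]
    rw [this, h2, h3]
    ring
  rw [sum_eq, kraw_hom q a k ha (-X) D]
  have hDA : D - (-X) = A := by
    rw [hD, hA]
    have : ((q:ℤ)-1) = ((q:ℤ)-2) + 1 := by ring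
    rw [this, C_add, C_1]
    ring
  have hDB : D + (((q:ℤ[X]))-1) * (-X) = B := by
    rw [hD, hB]
    simp only [C_sub, C_neg, C_1, C_eq_natCast, map_ofNat]
    ring
  rw [hDA, hDB, hG]
  -- combine powers
  have e1 : a + (n-2*k-(h-k)) = (n-k)-(h-a) := by omega
  have e2 : (k-a) + (h-k) = h-a := by omega
  have final : A^a * B^(k-a) * (A^(n-2*k-(h-k)) * B^(h-k))
      = A^((n-k)-(h-a)) * B^(h-a) := by
    rw [← e1, ← e2, pow_add, pow_add]
    ring
  rw [final]
  have := (kraw_coeff (R := ℤ) q (h-a) (n-k) j)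
  rw [Int.cast_id] at this
  rw [← hA, ← hB] at this
  exact this
end PolyPart

noncomputable def ww (q : ℕ) : ℂ := Complex.exp (2 * Real.pi * Complex.I / q)

section char
variable (q : ℕ) [NeZero q]

lemma ww_prim : IsPrimitiveRoot (ww q) q := Complex.isPrimitiveRoot_exp q (NeZero.ne q)

lemma ww_pow_q : ww q ^ q = 1 := (ww_prim q).pow_eq_one

lemma ww_pow_mod (y : ℕ) : ww q ^ (y % q) = ww q ^ y := by
  conv_rhs => rw [← Nat.div_add_mod y q]
  rw [pow_add, pow_mul, ww_pow_q, one_pow, one_mul]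

noncomputable def ee (q : ℕ) (z : Fin q) : ℂ := ww q ^ z.val

lemma ee_zero : ee q 0 = 1 := by
  simp [ee, Fin.val_zero]

lemma ee_add (a b : Fin q) : ee q (a + b) = ee q a * ee q b := by
  unfold ee
  rw [Fin.val_add, ww_pow_mod, pow_add]

lemma ee_sum (c : Fin q) : ∑ x : Fin q, ee q (c * x) = if c = 0 then (q:ℂ) else 0 := by
  split
  · rename_i h
    subst h
    simp [ee, Fin.val_zero]
  · rename_i hc
    have hterm : ∀ x : Fin q, ee q (c * x) = (ww q ^ c.val) ^ x.val := by
      intro x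
      unfold ee
      rw [Fin.val_mul, ww_pow_mod, pow_mul]
    simp only [hterm]
    rw [Fin.sum_univ_eq_sum_range (fun v => (ww q ^ c.val) ^ v) q]
    have hne : ww q ^ c.val ≠ 1 := by
      refine (ww_prim q).pow_ne_one_of_pos_of_lt ?_ c.isLt
      exact (fun (h0 : c.val = 0) => hc (Fin.ext (by rw [h0, Fin.val_zero])))
    have hgeo := geom_sum_mul (ww q ^ c.val) q
    rw [← pow_mul, mul_comm c.val q, pow_mul, ww_pow_q, one_pow, sub_self] at hgeo
    rcases mul_eq_zero.1 hgeo with h | h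
    · exact h
    · exact absurd (sub_eq_zero.1 h) hne

variable {n : ℕ}

noncomputable def chi (s x : Fin n → Fin q) : ℂ := ∏ t, ee q (s t * x t)

lemma ee_sum_ne (c : Fin q) :
    ∑ x ∈ Finset.univ.erase (0 : Fin q), ee q (c * x)
      = (if c = 0 then (q:ℂ) else 0) - 1 := by
  have h := Finset.add_sum_erase Finset.univ (fun x => ee q (c * x)) (Finset.mem_univ 0)
  rw [ee_sum] at h
  simp only [mul_zero, ee_zero] at h
  linear_combination h

lemma locdist_chi (s α : Fin n → Fin q) (I : Finset (Fin n)) (i : ℕ) :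
    locdist (chi q s) α I i
      = chi q s α * ((kraw q i ((I.filter (fun t => s t ≠ 0)).card) I.card : ℤ) : ℂ) := by
  classical
  set a : ℕ := (I.filter (fun t => s t ≠ 0)).card with haa
  set T : (t : Fin n) → Finset (Fin q) := fun t => if t ∈ I then Finset.univ else {α t} with hT
  set F : (t : Fin n) → Fin q → ℂ[X] :=
    fun t x => C (ee q (s t * x)) * (if α t = x then 1 else X) with hF
  have main : ∏ t, ∑ x ∈ T t, F t x = ∑ β ∈ Fintype.piFinset T, ∏ t, F t (β t) :=
    Finset.prod_univ_sum T F
  -- term value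
  have hterm : ∀ β : Fin n → Fin q, ∏ t, F t (β t) = C (chi q s β) * X ^ (hammingDist α β) := by
    intro β
    rw [hF]
    simp only
    rw [Finset.prod_mul_distrib, ← map_prod]
    congr 1
    rw [Finset.prod_ite, Finset.prod_const, Finset.prod_const, one_pow, one_mul]
    rfl
  -- local factor
  have hfac : ∀ t : Fin n, ∑ x ∈ T t, F t x
      = C (ee q (s t * α t)) *
        (if t ∈ I then (1 + C (if s t = 0 then (q:ℂ)-1 else -1) * X) else 1) := by
    intro t
    rw [hT, hF]
    simp only
    by_cases ht : t ∈ I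
    · rw [if_pos ht, if_pos ht]
      rw [← Equiv.sum_comp (Equiv.addLeft (α t))
        (fun x => C (ee q (s t * x)) * (if α t = x then 1 else X))]
      simp only [Equiv.coe_addLeft]
      show (∑ δ : Fin q, C (ee q (s t * (α t + δ))) * (if α t = α t + δ then 1 else X)) = _
      rw [(Finset.add_sum_erase Finset.univ
        (fun δ : Fin q => C (ee q (s t * (α t + δ))) * (if α t = α t + δ then 1 else X))
        (Finset.mem_univ 0)).symm]
      have h0 : C (ee q (s t * (α t + 0))) * (if α t = α t + 0 then 1 else X)
          = C (ee q (s t * α t)) := by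
        rw [add_zero, if_pos rfl, mul_one]
      rw [h0]
      have hne : ∀ δ ∈ Finset.univ.erase (0 : Fin q),
          C (ee q (s t * (α t + δ))) * (if α t = α t + δ then 1 else X)
          = (C (ee q (s t * α t)) * X) * C (ee q (s t * δ)) := by
        intro δ hδ
        rw [Finset.mem_erase] at hδ
        rw [if_neg (fun hcon => hδ.1 ((left_eq_add).1 hcon))]
        rw [mul_add, ee_add, map_mul]
        ring
      rw [Finset.sum_congr rfl hne, ← Finset.mul_sum, ← map_sum, ee_sum_ne]
      have hval : C ((if s t = 0 then (q:ℂ) else 0) - 1)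
          = C (if s t = 0 then (q:ℂ)-1 else -1) := by
        congr 1
        split_ifs <;> ring
      rw [hval]
      ring
    · rw [if_neg ht, if_neg ht]
      rw [Finset.sum_singleton, if_pos rfl, mul_one]
  -- product of local factors
  have hprod : ∏ t, ∑ x ∈ T t, F t x
      = C (chi q s α) * ((1 + C ((q:ℂ)-1) * X) ^ (I.card - a) * (1 + C (-1:ℂ) * X) ^ a) := by
    rw [Finset.prod_congr rfl (fun t _ => hfac t), Finset.prod_mul_distrib, ← map_prod]
    have h1 : (∏ t, ee q (s t * α t)) = chi q s α := rfl
    rw [h1]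
    congr 1
    have h2 : ∀ t : Fin n, (if t ∈ I then (1 + C (if s t = 0 then (q:ℂ)-1 else -1) * X) else 1)
        = (if t ∈ I then (if s t = 0 then (1 + C ((q:ℂ)-1) * X) else (1 + C (-1:ℂ) * X)) else 1) := by
      intro t
      by_cases ht : t ∈ I
      · rw [if_pos ht, if_pos ht, apply_ite (fun c : ℂ => 1 + C c * X)]
      · rw [if_neg ht, if_neg ht]
    rw [Finset.prod_congr rfl (fun t _ => h2 t), Finset.prod_ite_mem, Finset.univ_inter,
      Finset.prod_ite, Finset.prod_const, Finset.prod_const]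
    congr 2
    · have := Finset.card_filter_add_card_filter_not (s := I) (p := fun t => s t = 0)
      have ha' : (I.filter (fun t => ¬ s t = 0)).card = a := rfl
      omega
  -- the coefficient extraction
  have hset : Finset.univ.filter
      (fun β : Fin n → Fin q => (∀ t ∈ Iᶜ, β t = α t) ∧ hammingDist α β = i)
      = (Fintype.piFinset T).filter (fun β => hammingDist α β = i) := by
    ext β
    simp only [Finset.mem_filter, Finset.mem_univ, true_and, Fintype.mem_piFinset, hT]
    refine and_congr_left (fun _ => ?_)
    constructor
    · intro hface t
      by_cases htI : t ∈ I
      · simp [htI]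
      · simp [htI, hface t (Finset.mem_compl.2 htI)]
    · intro hpi t htc
      have := hpi t
      rw [if_neg (Finset.mem_compl.1 htc)] at this
      simpa using this
  have hld : locdist (chi q s) α I i
      = (∑ β ∈ Fintype.piFinset T, C (chi q s β) * X ^ (hammingDist α β)).coeff i := by
    rw [finset_sum_coeff]
    unfold locdist
    rw [hset, Finset.sum_filter]
    refine Finset.sum_congr rfl fun β _ => ?_
    rw [coeff_C_mul, coeff_X_pow]
    split_ifs with h1 h2 h2
    · rw [mul_one]
    · exact absurd h1.symm h2
    · exact absurd h2.symm h1
    · rw [mul_zero]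
  rw [hld, ← Finset.sum_congr rfl (fun β _ => hterm β), ← main, hprod, coeff_C_mul,
    kraw_coeff (R := ℂ) q a I.card i]
lemma kraw_one (q w N : ℕ) (hw : w ≤ N) :
    ((kraw q 1 w N : ℤ) : ℂ) = ((q:ℂ)-1) * N - q * w := by
  have : kraw q 1 w N = ((q:ℤ)-1) * ((N - w : ℕ) : ℤ) - w := by
    simp [kraw, Finset.sum_range_succ, Nat.choose_one_right]
    ring
  rw [this]
  have : ((N - w : ℕ) : ℤ) = (N : ℤ) - w := by omega
  rw [this]
  push_cast
  ring

lemma chi_add (s x y : Fin n → Fin q) : chi q s (x + y) = chi q s x * chi q s y := by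
  unfold chi
  rw [← Finset.prod_mul_distrib]
  refine Finset.prod_congr rfl fun t _ => ?_
  have : s t * (x + y) t = s t * x t + s t * y t := by
    rw [Pi.add_apply, mul_add]
  rw [this, ee_add]

lemma chi_sum (y : Fin n → Fin q) :
    ∑ s : Fin n → Fin q, chi q s y = if y = 0 then ((q:ℂ))^n else 0 := by
  unfold chi
  have hps := Finset.prod_univ_sum (fun _ : Fin n => (Finset.univ : Finset (Fin q)))
    (fun t c => ee q (c * y t))
  rw [Fintype.piFinset_univ] at hps
  rw [← hps]
  have : ∀ t : Fin n, ∑ c : Fin q, ee q (c * y t) = if y t = 0 then (q:ℂ) else 0 := by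
    intro t
    rw [← ee_sum q (y t)]
    exact Finset.sum_congr rfl fun c _ => by rw [mul_comm]
  rw [Finset.prod_congr rfl (fun t _ => this t)]
  by_cases hy : y = 0
  · subst hy
    simp
  · rw [if_neg hy]
    obtain ⟨t, ht⟩ := Function.ne_iff.1 hy
    refine Finset.prod_eq_zero (Finset.mem_univ t) ?_
    rw [if_neg (by simpa using ht)]

noncomputable def fhat (f : (Fin n → Fin q) → ℂ) (s : Fin n → Fin q) : ℂ :=
  ∑ x, f x * chi q s (-x)

lemma fourier_inv (f : (Fin n → Fin q) → ℂ) (γ : Fin n → Fin q) :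
    ((q:ℂ))^n * f γ = ∑ s : Fin n → Fin q, fhat q f s * chi q s γ := by
  symm
  unfold fhat
  calc ∑ s : Fin n → Fin q, (∑ x, f x * chi q s (-x)) * chi q s γ
      = ∑ s : Fin n → Fin q, ∑ x, f x * chi q s (γ + (-x)) := by
        refine Finset.sum_congr rfl fun s _ => ?_
        rw [Finset.sum_mul]
        refine Finset.sum_congr rfl fun x _ => ?_
        rw [chi_add]
        ring
    _ = ∑ x, ∑ s : Fin n → Fin q, f x * chi q s (γ + (-x)) := Finset.sum_comm
    _ = ∑ x, f x * (if γ + (-x) = 0 then ((q:ℂ))^n else 0) := by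
        refine Finset.sum_congr rfl fun x _ => ?_
        rw [← Finset.mul_sum, chi_sum]
    _ = ∑ x, (if x = γ then f x * ((q:ℂ))^n else 0) := by
        refine Finset.sum_congr rfl fun x _ => ?_
        rw [mul_ite, mul_zero]
        refine if_congr ?_ rfl rfl
        rw [add_neg_eq_zero]
        exact eq_comm
    _ = ((q:ℂ))^n * f γ := by
        rw [Finset.sum_ite_eq' Finset.univ γ (fun x => f x * ((q:ℂ))^n)]
        rw [if_pos (Finset.mem_univ γ)]
        ring

lemma locdist_univ (g : (Fin n → Fin q) → ℂ) (α : Fin n → Fin q) (j : ℕ) :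
    locdist g α Finset.univ j
      = ∑ β ∈ Finset.univ.filter (fun β : Fin n → Fin q => hammingDist α β = j), g β := by
  unfold locdist
  refine Finset.sum_congr ?_ (fun _ _ => rfl)
  ext β
  simp

lemma sphere_sum (s α : Fin n → Fin q) :
    ∑ β ∈ Finset.univ.filter (fun β : Fin n → Fin q => hammingDist α β = 1), chi q s β
      = (((q:ℂ)-1) * n - q * (((Finset.univ.filter (fun t => s t ≠ 0)).card : ℕ) : ℂ))
        * chi q s α := by
  have h := locdist_chi q s α Finset.univ 1
  rw [locdist_univ] at h
  have hcard : (Finset.univ : Finset (Fin n)).card = n := by simp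
  rw [hcard] at h
  have hwle : (Finset.univ.filter (fun t => s t ≠ 0)).card ≤ n := by
    exact (Finset.card_filter_le _ _).trans (le_of_eq hcard)
  rw [h, kraw_one q _ n hwle]
  ring

lemma hd_neg (x y : Fin n → Fin q) : hammingDist (-x) (-y) = hammingDist x y := by
  unfold hammingDist
  congr 1
  ext t
  simp

noncomputable def wt (s : Fin n → Fin q) : ℕ := (Finset.univ.filter (fun t => s t ≠ 0)).card

lemma fhat_vanish (h : ℕ) (f : (Fin n → Fin q) → ℂ)
    (hf : ∀ α, ∑ β ∈ Finset.univ.filter (fun β => hammingDist α β = 1), f β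
            = (((q:ℂ)-1)*n - q*h) * f α)
    (s : Fin n → Fin q) (hs : wt q s ≠ h) :
    fhat q f s = 0 := by
  classical
  set lh : ℂ := ((q:ℂ)-1)*n - (q:ℂ)*h with hlh
  set ls : ℂ := ((q:ℂ)-1)*n - (q:ℂ)*(wt q s : ℕ) with hls
  have hA : ∑ x : Fin n → Fin q,
      (∑ β ∈ Finset.univ.filter (fun β => hammingDist x β = 1), f β) * chi q s (-x)
      = lh * fhat q f s := by
    unfold fhat
    rw [Finset.mul_sum]
    refine Finset.sum_congr rfl fun x _ => ?_
    rw [hf x]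
    ring
  have hB : ∑ x : Fin n → Fin q,
      (∑ β ∈ Finset.univ.filter (fun β => hammingDist x β = 1), f β) * chi q s (-x)
      = ls * fhat q f s := by
    calc ∑ x : Fin n → Fin q,
        (∑ β ∈ Finset.univ.filter (fun β => hammingDist x β = 1), f β) * chi q s (-x)
        = ∑ x : Fin n → Fin q, ∑ β : Fin n → Fin q,
            (if hammingDist x β = 1 then f β * chi q s (-x) else 0) := by
          refine Finset.sum_congr rfl fun x _ => ?_
          rw [Finset.sum_mul, ← Finset.sum_filter]
      _ = ∑ β : Fin n → Fin q, ∑ x : Fin n → Fin q,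
            (if hammingDist x β = 1 then f β * chi q s (-x) else 0) := Finset.sum_comm
      _ = ∑ β : Fin n → Fin q, f β * (ls * chi q s (-β)) := by
          refine Finset.sum_congr rfl fun β _ => ?_
          rw [← Finset.sum_filter, ← Finset.mul_sum]
          congr 1
          have h2 : ∑ x ∈ Finset.univ.filter (fun x : Fin n → Fin q => hammingDist x β = 1),
              chi q s (-x)
              = ∑ y ∈ Finset.univ.filter (fun y : Fin n → Fin q => hammingDist (-β) y = 1),
                  chi q s y := by
            refine Finset.sum_nbij' (fun x => -x) (fun y => -y) ?_ ?_ ?_ ?_ ?_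
            · intro x hx
              rw [Finset.mem_filter] at hx ⊢
              refine ⟨Finset.mem_univ _, ?_⟩
              rw [show hammingDist (-β) (-x) = hammingDist β x from hd_neg q β x,
                hammingDist_comm]
              exact hx.2
            · intro y hy
              rw [Finset.mem_filter] at hy ⊢
              refine ⟨Finset.mem_univ _, ?_⟩
              have := hy.2
              rw [show hammingDist (-y) β = hammingDist y (-β) by
                rw [← hd_neg q y (-β), neg_neg], hammingDist_comm]
              exact this
            · intro x _; simp
            · intro y _; simp
            · intro x _; rfl
          rw [h2, sphere_sum q s (-β)]
          rfl
      _ = ls * fhat q f s := by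
          unfold fhat
          rw [Finset.mul_sum]
          refine Finset.sum_congr rfl fun β _ => ?_
          ring
  have heq : (lh - ls) * fhat q f s = 0 := by
    rw [sub_mul, hA.symm.trans hB]
    ring
  have hne : lh - ls ≠ 0 := by
    rw [hlh, hls]
    have h1 : ((q:ℂ)) ≠ 0 := Nat.cast_ne_zero.2 (NeZero.ne q)
    have h2 : ((wt q s : ℕ) : ℂ) ≠ (h : ℂ) := by
      exact_mod_cast fun hc => hs (Nat.cast_injective hc)
    intro hc
    apply h2
    have : (q:ℂ) * ((wt q s : ℕ) : ℂ) = (q:ℂ) * (h:ℂ) := by linear_combination hc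
    exact mul_left_cancel₀ h1 this
  have := mul_eq_zero.1 heq
  tauto
end char

lemma kraw_key_C (q n h k a j : ℕ) (ha : a ≤ k) (hk1 : k ≤ h) (hhn : h + k ≤ n) :
    ((kraw q j (h-a) (n-k) : ℤ) : ℂ) =
      ∑ i ∈ Finset.range (j+1), ((-1:ℂ)^i * ∑ l ∈ Finset.range (j-i+1),
          ((kraw q (j-i-l) (h-k) (n-2*k) : ℤ) : ℂ) * ((q:ℂ)-2)^l * (((k-i).choose l : ℕ) : ℂ))
        * ((kraw q i a k : ℤ) : ℂ) := by
  have hkey := congrArg (fun z : ℤ => (z : ℂ)) (kraw_key q n h k a j ha hk1 hhn)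
  push_cast at hkey
  exact hkey


/-- Case k ≤ min{h, n−h}: components of the (Ī,α)-local distribution of a
λ-eigenfunction expressed through the (I,α)-local distribution. -/
theorem stmt7 (q n h k : ℕ) (hq : 2 ≤ q) (hh : h ≤ n) (hk1 : k ≤ h) (hk2 : k ≤ n - h)
    (f : (Fin n → Fin q) → ℂ)
    (hf : ∀ α, ∑ β ∈ Finset.univ.filter (fun β => hammingDist α β = 1), f β
            = (((q:ℂ)-1)*n - q*h) * f α)
    (I : Finset (Fin n)) (hI : I.card = k)
    (α : Fin n → Fin q) (j : ℕ) (hj : j ≤ n - k) :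
    locdist f α Iᶜ j =
      ∑ i ∈ Finset.range (j+1),
        ((-1:ℂ)^i * ∑ l ∈ Finset.range (j-i+1),
            (kraw q (j-i-l) (h-k) (n-2*k) : ℂ) * ((q:ℂ)-2)^l * (((k-i).choose l : ℕ) : ℂ))
          * locdist f α I i := by
  classical
  haveI : NeZero q := ⟨by omega⟩
  have hqC : ((q:ℂ))^n ≠ 0 := pow_ne_zero _ (Nat.cast_ne_zero.2 (by omega))
  -- linearity
  have hlin : ∀ (J : Finset (Fin n)) (j' : ℕ),
      ((q:ℂ))^n * locdist f α J j'
        = ∑ s : Fin n → Fin q, fhat q f s * locdist (chi q s) α J j' := by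
    intro J j'
    unfold locdist
    rw [Finset.mul_sum]
    calc ∑ β ∈ Finset.univ.filter
          (fun β : Fin n → Fin q => (∀ t ∈ Jᶜ, β t = α t) ∧ hammingDist α β = j'),
          ((q:ℂ))^n * f β
        = ∑ β ∈ Finset.univ.filter
            (fun β : Fin n → Fin q => (∀ t ∈ Jᶜ, β t = α t) ∧ hammingDist α β = j'),
            ∑ s : Fin n → Fin q, fhat q f s * chi q s β := by
          exact Finset.sum_congr rfl fun β _ => fourier_inv q f β
      _ = ∑ s : Fin n → Fin q, ∑ β ∈ Finset.univ.filter
            (fun β : Fin n → Fin q => (∀ t ∈ Jᶜ, β t = α t) ∧ hammingDist α β = j'),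
            fhat q f s * chi q s β := Finset.sum_comm
      _ = ∑ s : Fin n → Fin q, fhat q f s * ∑ β ∈ Finset.univ.filter
            (fun β : Fin n → Fin q => (∀ t ∈ Jᶜ, β t = α t) ∧ hammingDist α β = j'),
            chi q s β := by
          exact Finset.sum_congr rfl fun s _ =>
            (Finset.mul_sum (Finset.univ.filter
              (fun β : Fin n → Fin q => (∀ t ∈ Jᶜ, β t = α t) ∧ hammingDist α β = j'))
              (fun β => chi q s β) (fhat q f s)).symm
  -- cardinalities
  have hcardC : Iᶜ.card = n - k := by
    rw [Finset.card_compl, hI]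
    simp
  have hsplitcard : ∀ s : Fin n → Fin q,
      (I.filter (fun t => s t ≠ 0)).card + (Iᶜ.filter (fun t => s t ≠ 0)).card = wt q s := by
    intro s
    unfold wt
    rw [← Finset.card_union_of_disjoint
      (Finset.disjoint_filter_filter disjoint_compl_right), ← Finset.filter_union,
      Finset.union_compl]
  -- per-character identity
  have pers : ∀ s : Fin n → Fin q,
      fhat q f s * locdist (chi q s) α Iᶜ j
        = fhat q f s * ∑ i ∈ Finset.range (j+1),
            ((-1:ℂ)^i * ∑ l ∈ Finset.range (j-i+1),
              (kraw q (j-i-l) (h-k) (n-2*k) : ℂ) * ((q:ℂ)-2)^l * (((k-i).choose l : ℕ) : ℂ))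
            * locdist (chi q s) α I i := by
    intro s
    by_cases hws : wt q s = h
    · set a : ℕ := (I.filter (fun t => s t ≠ 0)).card with haa
      have hak : a ≤ k := by rw [haa, ← hI]; exact Finset.card_filter_le _ _
      have hCa : (Iᶜ.filter (fun t => s t ≠ 0)).card = h - a := by
        have := hsplitcard s
        have hwn : wt q s ≤ n := by
          unfold wt
          exact (Finset.card_filter_le _ _).trans (by simp)
        omega
      rw [locdist_chi q s α Iᶜ j, hCa, hcardC]
      rw [kraw_key_C q n h k a j hak hk1 (by omega)]
      have e1 : chi q s α * ∑ i ∈ Finset.range (j+1),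
            ((-1:ℂ)^i * ∑ l ∈ Finset.range (j-i+1),
              ((kraw q (j-i-l) (h-k) (n-2*k) : ℤ) : ℂ) * ((q:ℂ)-2)^l * (((k-i).choose l : ℕ) : ℂ))
            * ((kraw q i a k : ℤ) : ℂ)
          = ∑ i ∈ Finset.range (j+1),
            ((-1:ℂ)^i * ∑ l ∈ Finset.range (j-i+1),
              ((kraw q (j-i-l) (h-k) (n-2*k) : ℤ) : ℂ) * ((q:ℂ)-2)^l * (((k-i).choose l : ℕ) : ℂ))
            * (chi q s α * ((kraw q i a k : ℤ) : ℂ)) := by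
        rw [Finset.mul_sum]
        exact Finset.sum_congr rfl fun i _ => by ring
      rw [e1]
      refine congrArg _ (Finset.sum_congr rfl fun i _ => ?_)
      rw [locdist_chi q s α I i, hI, ← haa]
    · rw [fhat_vanish q h f hf s hws]
      ring
  -- assemble
  refine mul_left_cancel₀ hqC ?_
  rw [hlin Iᶜ j]
  calc ∑ s : Fin n → Fin q, fhat q f s * locdist (chi q s) α Iᶜ j
      = ∑ s : Fin n → Fin q, ∑ i ∈ Finset.range (j+1),
          fhat q f s * (((-1:ℂ)^i * ∑ l ∈ Finset.range (j-i+1),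
            (kraw q (j-i-l) (h-k) (n-2*k) : ℂ) * ((q:ℂ)-2)^l * (((k-i).choose l : ℕ) : ℂ))
            * locdist (chi q s) α I i) := by
        refine Finset.sum_congr rfl fun s _ => ?_
        rw [pers s, Finset.mul_sum]
    _ = ∑ i ∈ Finset.range (j+1), ∑ s : Fin n → Fin q,
          fhat q f s * (((-1:ℂ)^i * ∑ l ∈ Finset.range (j-i+1),
            (kraw q (j-i-l) (h-k) (n-2*k) : ℂ) * ((q:ℂ)-2)^l * (((k-i).choose l : ℕ) : ℂ))
            * locdist (chi q s) α I i) := Finset.sum_comm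
    _ = ∑ i ∈ Finset.range (j+1),
          ((-1:ℂ)^i * ∑ l ∈ Finset.range (j-i+1),
            (kraw q (j-i-l) (h-k) (n-2*k) : ℂ) * ((q:ℂ)-2)^l * (((k-i).choose l : ℕ) : ℂ))
            * ∑ s : Fin n → Fin q, fhat q f s * locdist (chi q s) α I i := by
        refine Finset.sum_congr rfl fun i _ => ?_
        conv_rhs => rw [Finset.mul_sum]
        refine Finset.sum_congr rfl fun s _ => ?_
        ring
    _ = ∑ i ∈ Finset.range (j+1),
          ((-1:ℂ)^i * ∑ l ∈ Finset.range (j-i+1),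
            (kraw q (j-i-l) (h-k) (n-2*k) : ℂ) * ((q:ℂ)-2)^l * (((k-i).choose l : ℕ) : ℂ))
            * (((q:ℂ))^n * locdist f α I i) := by
        refine Finset.sum_congr rfl fun i _ => ?_
        rw [hlin I i]
    _ = ((q:ℂ))^n * ∑ i ∈ Finset.range (j+1),
          ((-1:ℂ)^i * ∑ l ∈ Finset.range (j-i+1),
            (kraw q (j-i-l) (h-k) (n-2*k) : ℂ) * ((q:ℂ)-2)^l * (((k-i).choose l : ℕ) : ℂ))
            * locdist f α I i := by
        conv_rhs => rw [Finset.mul_sum]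
        refine Finset.sum_congr rfl fun i _ => ?_
        ring
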